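/- arXiv:2303.14898 — 5 statements merged into one kernel-verified Lean document; each statement's English description precedes it below -/
import Mathlib

section
/- Let τ > 0 be a temperature, let λ ≥ 0 be a real number (the number of positive quadruples duplicated among the negative samples), and work on a probability space. Let f be a measurable real random variable with |f| ≤ 1 almost surely (the score of the positive sample), and let g₁, g₂, … be i.i.d. measurable real random variables with |g₁| ≤ 1 almost surely (the scores of the negative samples). For each integer N ≥ 1 define the centered NCE loss ℓ_N := −(1/τ)·E[f] + E[ log( (λ/N)·exp(f/τ) + (1/N)·Σ_{i=1}^{N} exp(g_i/τ) ) ]. Then ℓ_N converges as N → ∞, and lim_{N→∞} ℓ_N = −(1/τ)·E[f] + log E[exp(g₁/τ)]. -/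
open MeasureTheory ProbabilityTheory Filter

/-- The centered NCE loss `ℓ_N` converges as `N → ∞` to
`-(1/τ)·E[f] + log E[exp(g₁/τ)]`. -/
theorem centered_nce_loss_tendsto
    {Ω : Type*} [MeasurableSpace Ω] (μ : Measure Ω) [IsProbabilityMeasure μ]
    (τ lam : ℝ) (hτ : 0 < τ) (hlam : 0 ≤ lam)
    (f : Ω → ℝ) (hf : Measurable f) (hfb : ∀ᵐ ω ∂μ, |f ω| ≤ 1)
    (g : ℕ → Ω → ℝ) (hg : ∀ i, Measurable (g i))
    (hindep : iIndepFun g μ)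
    (hid : ∀ i, IdentDistrib (g i) (g 0) μ μ)
    (hgb : ∀ᵐ ω ∂μ, |g 0 ω| ≤ 1) :
    Tendsto
      (fun N : ℕ =>
        -(1 / τ) * μ[f] +
          μ[fun ω => Real.log ((lam / N) * Real.exp (f ω / τ) +
            (1 / N) * ∑ i ∈ Finset.range N, Real.exp (g i ω / τ))])
      atTop
      (nhds (-(1 / τ) * μ[f] + Real.log (μ[fun ω => Real.exp (g 0 ω / τ)]))) := by
  classical
  set X : ℕ → Ω → ℝ := fun i ω => Real.exp (g i ω / τ) with hX
  have hφ : Measurable fun x : ℝ => Real.exp (x / τ) :=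
    (Real.measurable_exp.comp (measurable_id.div_const τ))
  have hXmeas : ∀ i, Measurable (X i) := fun i => hφ.comp (hg i)
  -- bound on each g i a.e.
  have hgb_all : ∀ i, ∀ᵐ ω ∂μ, |g i ω| ≤ 1 := by
    intro i
    have hset : MeasurableSet {x : ℝ | |x| ≤ 1} :=
      measurableSet_le (measurable_norm) measurable_const
    have h0 : ∀ᵐ x ∂(μ.map (g 0)), |x| ≤ 1 :=
      (MeasureTheory.ae_map_iff (hg 0).aemeasurable hset).2 hgb
    have hi : ∀ᵐ x ∂(μ.map (g i)), |x| ≤ 1 := by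
      rw [(hid i).map_eq]; exact h0
    exact (MeasureTheory.ae_map_iff (hg i).aemeasurable hset).1 hi
  have hgb_all' : ∀ᵐ ω ∂μ, ∀ i, |g i ω| ≤ 1 := (MeasureTheory.ae_all_iff).2 hgb_all
  -- integrability of X 0
  have hXint : Integrable (X 0) μ := by
    refine (integrable_const (Real.exp (1 / τ))).mono' (hXmeas 0).aestronglyMeasurable ?_
    filter_upwards [hgb] with ω hω
    rw [Real.norm_eq_abs, abs_of_pos (Real.exp_pos _)]
    exact Real.exp_le_exp.2 (div_le_div_of_nonneg_right (le_of_abs_le hω) hτ.le)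
  set E : ℝ := μ[fun ω => Real.exp (g 0 ω / τ)] with hE
  have hEge : Real.exp (-(1 / τ)) ≤ E := by
    have : ∀ᵐ ω ∂μ, Real.exp (-(1 / τ)) ≤ X 0 ω := by
      filter_upwards [hgb] with ω hω
      refine Real.exp_le_exp.2 ?_
      rw [← neg_div]
      exact div_le_div_of_nonneg_right (neg_le_of_abs_le hω) hτ.le
    calc Real.exp (-(1 / τ)) = μ[fun _ : Ω => Real.exp (-(1 / τ))] := by
          simp
      _ ≤ E := integral_mono_ae (integrable_const _) hXint this
  have hEpos : 0 < E := lt_of_lt_of_le (Real.exp_pos _) hEge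
  -- strong law
  have hslln : ∀ᵐ ω ∂μ,
      Tendsto (fun n : ℕ => (∑ i ∈ Finset.range n, X i ω) / n) atTop (nhds E) := by
    have := strong_law_ae_real (μ := μ) X hXint
      (fun i j hij => (hindep.indepFun hij).comp hφ hφ)
      (fun i => (hid i).comp hφ)
    exact this
  -- a.e. convergence of integrand
  have hconv : ∀ᵐ ω ∂μ,
      Tendsto (fun N : ℕ => Real.log ((lam / N) * Real.exp (f ω / τ) +
        (1 / N) * ∑ i ∈ Finset.range N, X i ω)) atTop (nhds (Real.log E)) := by
    filter_upwards [hslln] with ω hω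
    have h1 : Tendsto (fun N : ℕ => (lam / N) * Real.exp (f ω / τ)) atTop (nhds 0) := by
      have := (tendsto_natCast_atTop_atTop (R := ℝ)).inv_tendsto_atTop
      have h2 : Tendsto (fun N : ℕ => lam / (N : ℝ)) atTop (nhds 0) := by
        simpa [div_eq_mul_inv] using this.const_mul lam
      simpa using h2.mul_const (Real.exp (f ω / τ))
    have h2 : Tendsto (fun N : ℕ => (lam / N) * Real.exp (f ω / τ) +
        (1 / N) * ∑ i ∈ Finset.range N, X i ω) atTop (nhds E) := by
      have := h1.add hω
      simpa [one_div, div_eq_mul_inv, mul_comm] using this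
    exact ((Real.continuousAt_log hEpos.ne').tendsto.comp h2)
  -- boundedness
  set C : ℝ := Real.log (lam + 1) + 1 / τ with hC
  have hCnn : 0 ≤ C := add_nonneg (Real.log_nonneg (by linarith)) (by positivity)
  have hbound : ∀ N : ℕ, ∀ᵐ ω ∂μ,
      ‖Real.log ((lam / N) * Real.exp (f ω / τ) +
        (1 / N) * ∑ i ∈ Finset.range N, X i ω)‖ ≤ C := by
    intro N
    rcases Nat.eq_zero_or_pos N with hN | hN
    · filter_upwards with ω
      simp [hN, hCnn]
    filter_upwards [hgb_all', hfb] with ω hω hfω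
    have hNpos : (0 : ℝ) < N := by exact_mod_cast hN
    set A : ℝ := (lam / N) * Real.exp (f ω / τ) + (1 / N) * ∑ i ∈ Finset.range N, X i ω
    have hlow : Real.exp (-(1 / τ)) ≤ A := by
      have hsum : (N : ℝ) * Real.exp (-(1 / τ)) ≤ ∑ i ∈ Finset.range N, X i ω := by
        calc (N : ℝ) * Real.exp (-(1 / τ))
            = ∑ _i ∈ Finset.range N, Real.exp (-(1 / τ)) := by
              simp [mul_comm]
          _ ≤ ∑ i ∈ Finset.range N, X i ω := by
              refine Finset.sum_le_sum fun i _ => Real.exp_le_exp.2 ?_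
              rw [← neg_div]
              exact div_le_div_of_nonneg_right (neg_le_of_abs_le (hω i)) hτ.le
      have : Real.exp (-(1 / τ)) ≤ (1 / N) * ∑ i ∈ Finset.range N, X i ω := by
        have h10 : (1 / (N:ℝ)) * ∑ i ∈ Finset.range N, X i ω
            = (∑ i ∈ Finset.range N, X i ω) / N := by ring
        rw [h10, le_div_iff₀ hNpos, mul_comm]
        exact hsum
      have hnn : 0 ≤ (lam / N) * Real.exp (f ω / τ) :=
        mul_nonneg (div_nonneg hlam hNpos.le) (Real.exp_pos _).le
      linarith
    have hup : A ≤ (lam + 1) * Real.exp (1 / τ) := by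
      have h1 : (lam / N) * Real.exp (f ω / τ) ≤ lam * Real.exp (1 / τ) := by
        have hN1 : (1 : ℝ) ≤ N := by exact_mod_cast hN
        have : lam / N ≤ lam := by
          rw [div_le_iff₀ hNpos]
          nlinarith
        exact mul_le_mul this
          (Real.exp_le_exp.2 (div_le_div_of_nonneg_right (le_of_abs_le hfω) hτ.le))
          (Real.exp_pos _).le hlam
      have h2 : (1 / N) * ∑ i ∈ Finset.range N, X i ω ≤ Real.exp (1 / τ) := by
        have h10 : (1 / (N:ℝ)) * ∑ i ∈ Finset.range N, X i ω
            = (∑ i ∈ Finset.range N, X i ω) / N := by ring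
        rw [h10, div_le_iff₀ hNpos]
        calc ∑ i ∈ Finset.range N, X i ω
            ≤ ∑ _i ∈ Finset.range N, Real.exp (1 / τ) := by
              refine Finset.sum_le_sum fun i _ => Real.exp_le_exp.2 ?_
              exact div_le_div_of_nonneg_right (le_of_abs_le (hω i)) hτ.le
          _ = Real.exp (1 / τ) * N := by simp [mul_comm]
      calc A ≤ lam * Real.exp (1 / τ) + Real.exp (1 / τ) := by linarith
        _ = (lam + 1) * Real.exp (1 / τ) := by ring
    have hApos : 0 < A := lt_of_lt_of_le (Real.exp_pos _) hlow
    rw [Real.norm_eq_abs, abs_le, hC]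
    constructor
    · have := Real.log_le_log (Real.exp_pos _) hlow
      rw [Real.log_exp] at this
      linarith [Real.log_nonneg (show (1:ℝ) ≤ lam + 1 by linarith)]
    · have := Real.log_le_log hApos hup
      rw [Real.log_mul (by linarith) (Real.exp_ne_zero _), Real.log_exp] at this
      exact this
  -- measurability of the integrands
  have hmeas : ∀ N : ℕ, AEStronglyMeasurable (fun ω =>
      Real.log ((lam / N) * Real.exp (f ω / τ) +
        (1 / N) * ∑ i ∈ Finset.range N, X i ω)) μ := by
    intro N
    refine (Real.measurable_log.comp ?_).aestronglyMeasurable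
    exact ((hφ.comp hf).const_mul _).add
      ((Finset.measurable_sum _ fun i _ => hXmeas i).const_mul _)
  have hmain : Tendsto (fun N : ℕ =>
      μ[fun ω => Real.log ((lam / N) * Real.exp (f ω / τ) +
        (1 / N) * ∑ i ∈ Finset.range N, X i ω)]) atTop (nhds (Real.log E)) := by
    have := tendsto_integral_of_dominated_convergence (fun _ => C) hmeas
      (integrable_const C) hbound hconv
    simpa using this
  exact tendsto_const_nhds.add hmain
end

section
/- Let τ > 0, let λ ≥ 0, and work on a probability space. Let f be a measurable real random variable with |f| ≤ 1 almost surely, and let g₁, g₂, … be identically distributed measurable real random variables with |g₁| ≤ 1 almost surely. For each integer N ≥ 1 define ℓ_N := −(1/τ)·E[f] + E[ log( (λ/N)·exp(f/τ) + (1/N)·Σ_{i=1}^{N} exp(g_i/τ) ) ] and ℓ_∞ := −(1/τ)·E[f] + log E[exp(g₁/τ)]. Then for every N ≥ 1, ℓ_N − ℓ_∞ ≤ (λ/N)·exp(2/τ). -/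
set_option maxHeartbeats 1000000


open MeasureTheory ProbabilityTheory

/-- Upper deviation of the centered NCE loss from its limit:
`ℓ_N − ℓ_∞ ≤ (λ/N)·exp(2/τ)` for every `N ≥ 1`. -/
theorem centered_nce_loss_upper_deviation
    {Ω : Type*} [MeasurableSpace Ω] (μ : Measure Ω) [IsProbabilityMeasure μ]
    (τ lam : ℝ) (hτ : 0 < τ) (hlam : 0 ≤ lam)
    (f : Ω → ℝ) (hf : Measurable f) (hfb : ∀ᵐ ω ∂μ, |f ω| ≤ 1)
    (g : ℕ → Ω → ℝ) (hg : ∀ i, Measurable (g i))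
    (hid : ∀ i, IdentDistrib (g i) (g 0) μ μ)
    (hgb : ∀ᵐ ω ∂μ, |g 0 ω| ≤ 1) :
    ∀ N : ℕ, 1 ≤ N →
      (-(1 / τ) * μ[f] +
          μ[fun ω => Real.log ((lam / N) * Real.exp (f ω / τ) +
            (1 / N) * ∑ i ∈ Finset.range N, Real.exp (g i ω / τ))]) -
        (-(1 / τ) * μ[f] + Real.log (μ[fun ω => Real.exp (g 0 ω / τ)])) ≤
      (lam / N) * Real.exp (2 / τ) := by
  intro N hN
  have hN0 : (0:ℝ) < N := by exact_mod_cast hN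
  have hτ' : (0:ℝ) < 1 / τ := by positivity
  -- transfer the a.e. bound to every g i
  have hsm : MeasurableSet {x : ℝ | ¬ |x| ≤ 1} :=
    (measurableSet_le measurable_abs measurable_const).compl
  have hgbi : ∀ i, ∀ᵐ ω ∂μ, |g i ω| ≤ 1 := by
    intro i
    have h0 : (μ.map (g 0)) {x : ℝ | ¬ |x| ≤ 1} = 0 := by
      rw [Measure.map_apply (hg 0) hsm]
      exact ae_iff.mp hgb
    have hi : (μ.map (g i)) {x : ℝ | ¬ |x| ≤ 1} = 0 := by
      rw [(hid i).map_eq]; exact h0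
    rw [Measure.map_apply (hg i) hsm] at hi
    exact ae_iff.mpr hi
  -- measurability / integrability of exp(g i / τ)
  have hEmeas : ∀ i, Measurable fun ω => Real.exp (g i ω / τ) :=
    fun i => ((hg i).div_const τ).exp
  have hEint : ∀ i, Integrable (fun ω => Real.exp (g i ω / τ)) μ := by
    intro i
    refine (integrable_const (Real.exp (1 / τ))).mono'
      (hEmeas i).aestronglyMeasurable ?_
    filter_upwards [hgbi i] with ω hω
    rw [Real.norm_eq_abs, abs_of_pos (Real.exp_pos _)]
    have h2 : g i ω ≤ 1 := (abs_le.mp hω).2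
    exact Real.exp_le_exp.mpr (by gcongr)
  set c : ℝ := μ[fun ω => Real.exp (g 0 ω / τ)] with hc
  -- c ≥ exp(-(1/τ)) > 0
  have hclb : Real.exp (-(1/τ)) ≤ c := by
    have : ∫ _ : Ω, Real.exp (-(1/τ)) ∂μ ≤ ∫ ω, Real.exp (g 0 ω / τ) ∂μ := by
      refine integral_mono_ae (integrable_const _) (hEint 0) ?_
      filter_upwards [hgb] with ω hω
      apply Real.exp_le_exp.mpr
      have h1 : -1 ≤ g 0 ω := (abs_le.mp hω).1
      rw [show -(1/τ) = (-1)/τ by ring]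
      gcongr
    simpa using this
  have hcpos : 0 < c := lt_of_lt_of_le (Real.exp_pos _) hclb
  -- all exp(g i/τ) have the same mean c
  have hEi : ∀ i, ∫ ω, Real.exp (g i ω / τ) ∂μ = c := by
    intro i
    have := ((hid i).comp (u := fun x : ℝ => Real.exp (x / τ))
      ((measurable_id.div_const τ).exp)).integral_eq
    simpa [Function.comp] using this
  -- A : the average of exponentials
  set A : Ω → ℝ := fun ω => (1 / N) * ∑ i ∈ Finset.range N, Real.exp (g i ω / τ) with hA
  have hAint : Integrable A μ := by
    have : Integrable (fun ω => ∑ i ∈ Finset.range N, Real.exp (g i ω / τ)) μ :=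
      integrable_finset_sum _ (fun i _ => hEint i)
    exact this.const_mul _
  have hAmean : ∫ ω, A ω ∂μ = c := by
    rw [hA]
    rw [integral_const_mul]
    rw [integral_finset_sum _ (fun i _ => hEint i)]
    simp only [hEi, Finset.sum_const, Finset.card_range, nsmul_eq_mul]
    field_simp
  -- B : the full argument of the log
  set B : Ω → ℝ := fun ω => (lam / N) * Real.exp (f ω / τ) + A ω with hB
  set K : ℝ := (lam / N) * Real.exp (2 / τ) with hK
  -- a.e. event with pointwise bounds
  have hae : ∀ᵐ ω ∂μ, |f ω| ≤ 1 ∧ ∀ i, |g i ω| ≤ 1 := by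
    refine hfb.and ?_
    exact (ae_all_iff).mpr hgbi
  -- pointwise facts on the good event
  have hApt : ∀ᵐ ω ∂μ, Real.exp (-(1/τ)) ≤ A ω ∧ A ω ≤ Real.exp (1/τ) := by
    filter_upwards [hae] with ω hω
    obtain ⟨-, hgω⟩ := hω
    have hterm : ∀ i, Real.exp (-(1/τ)) ≤ Real.exp (g i ω / τ) ∧
        Real.exp (g i ω / τ) ≤ Real.exp (1/τ) := by
      intro i
      obtain ⟨h1, h2⟩ := abs_le.mp (hgω i)
      constructor
      · apply Real.exp_le_exp.mpr
        rw [show -(1/τ) = (-1)/τ by ring]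
        gcongr
      · exact Real.exp_le_exp.mpr (by gcongr)
    have hlb : (N : ℝ) * Real.exp (-(1/τ)) ≤ ∑ i ∈ Finset.range N, Real.exp (g i ω / τ) := by
      rw [show (N:ℝ) * Real.exp (-(1/τ)) = ∑ _i ∈ Finset.range N, Real.exp (-(1/τ)) by
        simp [Finset.sum_const, nsmul_eq_mul]]
      exact Finset.sum_le_sum fun i _ => (hterm i).1
    have hub : ∑ i ∈ Finset.range N, Real.exp (g i ω / τ) ≤ (N : ℝ) * Real.exp (1/τ) := by
      rw [show (N:ℝ) * Real.exp (1/τ) = ∑ _i ∈ Finset.range N, Real.exp (1/τ) by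
        simp [Finset.sum_const, nsmul_eq_mul]]
      exact Finset.sum_le_sum fun i _ => (hterm i).2
    constructor
    · have h := mul_le_mul_of_nonneg_left hlb (by positivity : (0:ℝ) ≤ 1/N)
      calc Real.exp (-(1/τ)) = (1/N) * ((N:ℝ) * Real.exp (-(1/τ))) := by field_simp
        _ ≤ A ω := h
    · have h := mul_le_mul_of_nonneg_left hub (by positivity : (0:ℝ) ≤ 1/N)
      calc A ω ≤ (1/N) * ((N:ℝ) * Real.exp (1/τ)) := h
        _ = Real.exp (1/τ) := by field_simp
  -- the key pointwise inequality
  have hptwise : ∀ᵐ ω ∂μ,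
      Real.log (B ω) ≤ Real.log c + A ω / c - 1 + K := by
    filter_upwards [hae, hApt] with ω ⟨hfω, hgω⟩ ⟨hAlb, hAub⟩
    set a := A ω
    set b := (lam / N) * Real.exp (f ω / τ) with hb
    have hapos : 0 < a := lt_of_lt_of_le (Real.exp_pos _) hAlb
    have hbnn : 0 ≤ b := by positivity
    have hbub : b ≤ (lam / N) * Real.exp (1/τ) := by
      have h2 : f ω ≤ 1 := (abs_le.mp hfω).2
      have : Real.exp (f ω / τ) ≤ Real.exp (1/τ) := Real.exp_le_exp.mpr (by gcongr)
      exact mul_le_mul_of_nonneg_left this (by positivity)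
    -- step 1 : log(b+a) ≤ log a + b/a
    have h1 : Real.log (b + a) ≤ Real.log a + b / a := by
      have hx : 0 < (b + a) / a := by positivity
      have := Real.log_le_sub_one_of_pos hx
      rw [Real.log_div (by positivity) (ne_of_gt hapos)] at this
      have heq : (b + a) / a - 1 = b / a := by field_simp; ring
      linarith [this, heq.le, heq.ge]
    -- step 2 : b/a ≤ K
    have h2 : b / a ≤ K := by
      have h3 : b / a ≤ ((lam / N) * Real.exp (1/τ)) / Real.exp (-(1/τ)) := by
        apply div_le_div₀ (by positivity) hbub (Real.exp_pos _) hAlb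
      have h4 : ((lam / N) * Real.exp (1/τ)) / Real.exp (-(1/τ)) = K := by
        rw [hK, mul_div_assoc, ← Real.exp_sub]
        congr 1
        ring
      linarith
    -- step 3 : log a ≤ log c + a/c - 1
    have h5 : Real.log a ≤ Real.log c + a / c - 1 := by
      have hx : 0 < a / c := by positivity
      have := Real.log_le_sub_one_of_pos hx
      rw [Real.log_div (ne_of_gt hapos) (ne_of_gt hcpos)] at this
      linarith
    have : Real.log (B ω) = Real.log (b + a) := rfl
    linarith [h1, h2, h5]
  -- integrability of log ∘ B
  have hBmeas : Measurable fun ω => Real.log (B ω) := by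
    apply Measurable.log
    exact ((hf.div_const τ).exp.const_mul _).add
      ((Finset.measurable_sum _ (fun i _ => hEmeas i)).const_mul _)
  have hlogBint : Integrable (fun ω => Real.log (B ω)) μ := by
    refine (integrable_const ((lam + 1) * Real.exp (1/τ) + 1/τ)).mono'
      hBmeas.aestronglyMeasurable ?_
    filter_upwards [hae, hApt] with ω hω hA2
    obtain ⟨hfω, -⟩ := hω
    obtain ⟨hAlb, hAub⟩ := hA2
    have hf2 : f ω ≤ 1 := (abs_le.mp hfω).2
    have h1 : Real.exp (f ω / τ) ≤ Real.exp (1/τ) := Real.exp_le_exp.mpr (by gcongr)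
    have h2 : lam / (N:ℝ) ≤ lam := by
      rw [div_le_iff₀ hN0]
      calc lam = lam * 1 := by ring
        _ ≤ lam * N := by gcongr; exact_mod_cast hN
    have hbnn : 0 ≤ (lam / N) * Real.exp (f ω / τ) := by positivity
    have hbub : (lam / N) * Real.exp (f ω / τ) ≤ lam * Real.exp (1/τ) :=
      mul_le_mul h2 h1 (Real.exp_pos _).le hlam
    have hBeq : B ω = (lam / N) * Real.exp (f ω / τ) + A ω := rfl
    have hBlb : Real.exp (-(1/τ)) ≤ B ω := by rw [hBeq]; linarith
    have hring : (lam + 1) * Real.exp (1/τ) = lam * Real.exp (1/τ) + Real.exp (1/τ) := by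
      ring
    have hBub : B ω ≤ (lam + 1) * Real.exp (1/τ) := by rw [hBeq]; linarith
    have hBpos : 0 < B ω := lt_of_lt_of_le (Real.exp_pos _) hBlb
    have hlog_ub := Real.log_le_sub_one_of_pos hBpos
    have hlog_lb : -(1/τ) ≤ Real.log (B ω) := by
      have h := Real.log_le_log (Real.exp_pos _) hBlb
      rwa [Real.log_exp] at h
    have hnn : 0 ≤ (lam + 1) * Real.exp (1/τ) := by positivity
    have hub2 : Real.log (B ω) ≤ (lam + 1) * Real.exp (1/τ) := by
      have h3 : B ω - 1 ≤ (lam + 1) * Real.exp (1/τ) :=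
        le_trans (by linarith) hBub
      exact le_trans hlog_ub h3
    rw [Real.norm_eq_abs, abs_le]
    constructor
    · linarith
    · linarith
  -- integrability of the majorant
  have hmajint : Integrable (fun ω => Real.log c + A ω / c - 1 + K) μ := by
    have : Integrable (fun ω => A ω / c) μ := hAint.div_const c
    have heq : (fun ω => Real.log c + A ω / c - 1 + K)
        = (fun ω => A ω / c) + (fun _ => Real.log c - 1 + K) := by
      funext ω; simp only [Pi.add_apply]; ring
    rw [heq]
    exact this.add (integrable_const _)
  -- integrate the pointwise inequality
  have hint : ∫ ω, Real.log (B ω) ∂μ ≤ ∫ ω, (Real.log c + A ω / c - 1 + K) ∂μ :=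
    integral_mono_ae hlogBint hmajint hptwise
  have hmaj : ∫ ω, (Real.log c + A ω / c - 1 + K) ∂μ = Real.log c + K := by
    have h1 : (fun ω => Real.log c + A ω / c - 1 + K)
        = fun ω => A ω / c + (Real.log c - 1 + K) := by funext ω; ring
    rw [h1, integral_add (hAint.div_const c) (integrable_const _), integral_div, hAmean,
      integral_const]
    simp [div_self (ne_of_gt hcpos)]
    ring_nf
  have hfin : μ[fun ω => Real.log (B ω)] ≤ Real.log c + K := by
    rw [← hmaj]; exact hint
  have hBgoal : (fun ω => Real.log ((lam / N) * Real.exp (f ω / τ) +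
      (1 / N) * ∑ i ∈ Finset.range N, Real.exp (g i ω / τ)))
      = fun ω => Real.log (B ω) := by
    funext ω
    simp only [hB, hA]
  rw [hBgoal]
  linarith
end

section
/- Let τ > 0, let λ ≥ 0, and work on a probability space. Let f be a measurable real random variable with |f| ≤ 1 almost surely, and let g₁, g₂, … be i.i.d. measurable real random variables with |g₁| ≤ 1 almost surely. For each integer N ≥ 1 define ℓ_N := −(1/τ)·E[f] + E[ log( (λ/N)·exp(f/τ) + (1/N)·Σ_{i=1}^{N} exp(g_i/τ) ) ] and ℓ_∞ := −(1/τ)·E[f] + log E[exp(g₁/τ)]. Then for every N ≥ 1, ℓ_∞ − ℓ_N ≤ (λ/N)·exp(2/τ) + (5/4)·N^(−2/3)·exp(1/τ)·(exp(1/τ) − exp(−1/τ)). -/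
open MeasureTheory ProbabilityTheory

private lemma nce_log_key {a m x : ℝ} (ha : 0 < a) (ham : a ≤ m) (hax : a ≤ x) :
    Real.log m - Real.log x ≤ (m - x) / m + (x - m) ^ 2 / (a * m) := by
  have hx : 0 < x := lt_of_lt_of_le ha hax
  have hm : 0 < m := lt_of_lt_of_le ha ham
  have h1 : Real.log m - Real.log x = Real.log (m / x) :=
    (Real.log_div hm.ne' hx.ne').symm
  have h2 : Real.log (m / x) ≤ m / x - 1 := Real.log_le_sub_one_of_pos (by positivity)
  have h3 : m / x - 1 = (m - x) / m + (x - m) ^ 2 / (x * m) := by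
    field_simp
    ring
  have h5 : (x - m) ^ 2 / (x * m) ≤ (x - m) ^ 2 / (a * m) := by
    apply div_le_div_of_nonneg_left (sq_nonneg _) (by positivity)
    exact mul_le_mul_of_nonneg_right hax hm.le
  linarith

private lemma nce_integrable_of_bound {Ω : Type*} [MeasurableSpace Ω] {μ : Measure Ω}
    [IsFiniteMeasure μ] {f : Ω → ℝ} (C : ℝ) (hf : AEStronglyMeasurable f μ)
    (h : ∀ᵐ ω ∂μ, |f ω| ≤ C) : Integrable f μ :=
  (integrable_const C).mono' hf (by simpa [Real.norm_eq_abs] using h)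

set_option maxHeartbeats 1000000 in
/-- Lower deviation of the centered NCE loss from its limit:
`ℓ_∞ − ℓ_N ≤ (λ/N)·exp(2/τ) + (5/4)·N^(−2/3)·exp(1/τ)·(exp(1/τ) − exp(−1/τ))`
for every `N ≥ 1`. -/
theorem centered_nce_loss_lower_deviation
    {Ω : Type*} [MeasurableSpace Ω] (μ : Measure Ω) [IsProbabilityMeasure μ]
    (τ lam : ℝ) (hτ : 0 < τ) (hlam : 0 ≤ lam)
    (f : Ω → ℝ) (hf : Measurable f) (hfb : ∀ᵐ ω ∂μ, |f ω| ≤ 1)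
    (g : ℕ → Ω → ℝ) (hg : ∀ i, Measurable (g i))
    (hindep : iIndepFun g μ)
    (hid : ∀ i, IdentDistrib (g i) (g 0) μ μ)
    (hgb : ∀ᵐ ω ∂μ, |g 0 ω| ≤ 1) :
    ∀ N : ℕ, 1 ≤ N →
      (-(1 / τ) * μ[f] + Real.log (μ[fun ω => Real.exp (g 0 ω / τ)])) -
        (-(1 / τ) * μ[f] +
          μ[fun ω => Real.log ((lam / N) * Real.exp (f ω / τ) +
            (1 / N) * ∑ i ∈ Finset.range N, Real.exp (g i ω / τ))]) ≤
      (lam / N) * Real.exp (2 / τ) +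
        (5 / 4) * (N : ℝ) ^ (-(2 : ℝ) / 3) * Real.exp (1 / τ) *
          (Real.exp (1 / τ) - Real.exp (-(1 / τ))) := by
  intro N hN
  have hNpos : (0 : ℝ) < N := by exact_mod_cast Nat.lt_of_lt_of_le Nat.zero_lt_one hN
  have hN1 : (1 : ℝ) ≤ N := by exact_mod_cast hN
  set a : ℝ := Real.exp (-(1 / τ)) with ha_def
  set b : ℝ := Real.exp (1 / τ) with hb_def
  have ha : 0 < a := Real.exp_pos _
  have hb : 0 < b := Real.exp_pos _
  have hab : a * b = 1 := by
    rw [ha_def, hb_def, ← Real.exp_add]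
    simp
  have hba : a ≤ b := Real.exp_le_exp.mpr (by
    have := one_div_pos.mpr hτ; linarith)
  -- the transformed random variables
  set X : ℕ → Ω → ℝ := fun i ω => Real.exp (g i ω / τ) with hX_def
  have hXmeas : ∀ i, Measurable (X i) := fun i =>
    Real.measurable_exp.comp ((hg i).div_const τ)
  have hgib : ∀ i, ∀ᵐ ω ∂μ, |g i ω| ≤ 1 := fun i =>
    (hid i).symm.ae_snd (p := fun x : ℝ => |x| ≤ 1)
      (measurableSet_le (measurable_abs) measurable_const) hgb
  have hXb : ∀ i, ∀ᵐ ω ∂μ, X i ω ∈ Set.Icc a b := by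
    intro i
    filter_upwards [hgib i] with ω hω
    obtain ⟨h1, h2⟩ := abs_le.mp hω
    constructor
    · refine Real.exp_le_exp.mpr ?_
      have := div_le_div_of_nonneg_right (c := τ) h1 hτ.le
      simpa [neg_div] using this
    · refine Real.exp_le_exp.mpr ?_
      exact div_le_div_of_nonneg_right h2 hτ.le
  have hX2 : ∀ i, MemLp (X i) 2 μ := fun i =>
    memLp_of_bounded (hXb i) (hXmeas i).aestronglyMeasurable 2
  have hXint : ∀ i, Integrable (X i) μ := fun i => (hX2 i).integrable one_le_two
  set m : ℝ := μ[fun ω => Real.exp (g 0 ω / τ)] with hm_def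
  have hm0 : μ[X 0] = m := rfl
  have hmi : ∀ i, μ[X i] = m := by
    intro i
    have : IdentDistrib (X i) (X 0) μ μ :=
      (hid i).comp (Real.measurable_exp.comp (measurable_id.div_const τ))
    rw [← hm0]
    exact this.integral_eq
  have ham : a ≤ m := by
    have h := integral_mono_ae (integrable_const a) (hXint 0)
      ((hXb 0).mono fun ω h => h.1)
    simpa using h
  have hmb : m ≤ b := by
    have h := integral_mono_ae (hXint 0) (integrable_const b)
      ((hXb 0).mono fun ω h => h.2)
    simpa using h
  have hm : 0 < m := lt_of_lt_of_le ha ham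
  -- the sample average
  set S : Ω → ℝ := fun ω => (1 / (N : ℝ)) * ∑ i ∈ Finset.range N, X i ω with hS_def
  have hSmeas : Measurable S :=
    measurable_const.mul (Finset.measurable_sum _ fun i _ => hXmeas i)
  have hSb : ∀ᵐ ω ∂μ, S ω ∈ Set.Icc a b := by
    filter_upwards [ae_all_iff.mpr hXb] with ω hω
    have hlo : (N : ℝ) * a ≤ ∑ i ∈ Finset.range N, X i ω := by
      calc (N : ℝ) * a = ∑ _i ∈ Finset.range N, a := by
            simp [Finset.sum_const, mul_comm]
        _ ≤ ∑ i ∈ Finset.range N, X i ω :=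
            Finset.sum_le_sum fun i _ => (hω i).1
    have hhi : ∑ i ∈ Finset.range N, X i ω ≤ (N : ℝ) * b := by
      calc ∑ i ∈ Finset.range N, X i ω ≤ ∑ _i ∈ Finset.range N, b :=
            Finset.sum_le_sum fun i _ => (hω i).2
        _ = (N : ℝ) * b := by simp [Finset.sum_const, mul_comm]
    constructor
    · have : (1 / (N : ℝ)) * ((N : ℝ) * a) ≤ S ω :=
        mul_le_mul_of_nonneg_left hlo (by positivity)
      calc a = (1 / (N : ℝ)) * ((N : ℝ) * a) := by field_simp
        _ ≤ S ω := this
    · have : S ω ≤ (1 / (N : ℝ)) * ((N : ℝ) * b) :=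
        mul_le_mul_of_nonneg_left hhi (by positivity)
      calc S ω ≤ (1 / (N : ℝ)) * ((N : ℝ) * b) := this
        _ = b := by field_simp
  have hS2 : MemLp S 2 μ := memLp_of_bounded hSb hSmeas.aestronglyMeasurable 2
  have hSint : Integrable S μ := hS2.integrable one_le_two
  have hES : μ[S] = m := by
    have h1 : μ[S] = (1 / (N : ℝ)) * μ[fun ω => ∑ i ∈ Finset.range N, X i ω] :=
      integral_const_mul _ _
    have h2 : μ[fun ω => ∑ i ∈ Finset.range N, X i ω]
        = ∑ i ∈ Finset.range N, μ[X i] :=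
      integral_finset_sum _ fun i _ => hXint i
    rw [h1, h2]
    have : ∑ i ∈ Finset.range N, μ[X i] = (N : ℝ) * m := by
      simp [hmi, Finset.sum_const, mul_comm]
    rw [this]
    field_simp
  -- variance bound
  have hVX : variance (X 0) μ ≤ (b - a) * (m - a) := by
    have hXsq : μ[(X 0) ^ 2] ≤ (a + b) * m - a * b := by
      have hpt : ∀ᵐ ω ∂μ, (X 0 ω) ^ 2 ≤ (a + b) * X 0 ω - a * b :=
        (hXb 0).mono fun ω h => by nlinarith [h.1, h.2]
      have h := integral_mono_ae (hX2 0).integrable_sq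
        (((hXint 0).const_mul (a + b)).sub (integrable_const (a * b))) hpt
      have hr : μ[fun ω => (a + b) * X 0 ω - a * b] = (a + b) * m - a * b := by
        rw [integral_sub ((hXint 0).const_mul (a + b)) (integrable_const (a * b)),
          integral_const_mul]
        simp [hm0]
      calc μ[(X 0) ^ 2] = μ[fun ω => (X 0 ω) ^ 2] := rfl
        _ ≤ μ[fun ω => (a + b) * X 0 ω - a * b] := h
        _ = (a + b) * m - a * b := hr
    have hv : variance (X 0) μ = μ[(X 0) ^ 2] - m ^ 2 := by
      rw [variance_eq_sub (hX2 0), hm0]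
    nlinarith [sq_nonneg (m - a)]
  have hXindep : iIndepFun X μ :=
    hindep.comp (fun _ x => Real.exp (x / τ))
      (fun _ => Real.measurable_exp.comp (measurable_id.div_const τ))
  have hVsum : variance (fun ω => ∑ i ∈ Finset.range N, X i ω) μ
      = ∑ i ∈ Finset.range N, variance (X i) μ := by
    have hfun : (fun ω => ∑ i ∈ Finset.range N, X i ω)
        = ∑ i ∈ Finset.range N, X i := by
      ext ω; simp
    rw [hfun]
    exact IndepFun.variance_sum (fun i _ => hX2 i)
      (fun i _ j _ hij => hXindep.indepFun hij)
  have hVXi : ∀ i, variance (X i) μ = variance (X 0) μ := fun i =>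
    ((hid i).comp (Real.measurable_exp.comp (measurable_id.div_const τ))).variance_eq
  have hVS : variance S μ ≤ (b - a) * (m - a) / N := by
    have h1 : variance S μ = (1 / (N : ℝ)) ^ 2
        * variance (fun ω => ∑ i ∈ Finset.range N, X i ω) μ :=
      variance_const_mul _ _ _
    have h2 : ∑ i ∈ Finset.range N, variance (X i) μ = (N : ℝ) * variance (X 0) μ := by
      simp [hVXi, Finset.sum_const, mul_comm]
    rw [h1, hVsum, h2]
    have h3 : (1 / (N : ℝ)) ^ 2 * ((N : ℝ) * variance (X 0) μ)
        = variance (X 0) μ / N := by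
      field_simp
    rw [h3]
    exact div_le_div_of_nonneg_right hVX hNpos.le
  have hVar_eq : μ[fun ω => (S ω - m) ^ 2] = variance S μ := by
    rw [variance_eq_integral hS2.aemeasurable, hES]
  -- integrability of the log terms
  have hlogS_int : Integrable (fun ω => Real.log (S ω)) μ := by
    refine nce_integrable_of_bound (|Real.log a| + |Real.log b|)
      (Real.measurable_log.comp hSmeas).aestronglyMeasurable ?_
    filter_upwards [hSb] with ω h
    have h1 : Real.log a ≤ Real.log (S ω) := Real.log_le_log ha h.1
    have h2 : Real.log (S ω) ≤ Real.log b := Real.log_le_log (lt_of_lt_of_le ha h.1) h.2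
    have := abs_le_max_abs_abs h1 h2
    calc |Real.log (S ω)| ≤ max |Real.log a| |Real.log b| := this
      _ ≤ |Real.log a| + |Real.log b| := max_le_add_of_nonneg (abs_nonneg _) (abs_nonneg _)
  set B : ℝ := (lam / (N : ℝ)) * b + b with hB_def
  have hB : 0 < B := by positivity
  set logW : Ω → ℝ := fun ω => Real.log ((lam / (N : ℝ)) * Real.exp (f ω / τ) +
      (1 / (N : ℝ)) * ∑ i ∈ Finset.range N, Real.exp (g i ω / τ)) with hlogW_def
  have hWb : ∀ᵐ ω ∂μ, S ω ≤ (lam / (N : ℝ)) * Real.exp (f ω / τ) + S ω ∧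
      (lam / (N : ℝ)) * Real.exp (f ω / τ) + S ω ≤ B := by
    filter_upwards [hfb, hSb] with ω hfω hSω
    have hexp : Real.exp (f ω / τ) ≤ b := by
      refine Real.exp_le_exp.mpr ?_
      exact div_le_div_of_nonneg_right (abs_le.mp hfω).2 hτ.le
    have hnn : 0 ≤ (lam / (N : ℝ)) * Real.exp (f ω / τ) := by positivity
    constructor
    · linarith
    · have h1 : (lam / (N : ℝ)) * Real.exp (f ω / τ) ≤ (lam / (N : ℝ)) * b :=
        mul_le_mul_of_nonneg_left hexp (by positivity)
      have h2 : S ω ≤ b := hSω.2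
      rw [hB_def]; linarith
  have hlogW_int : Integrable logW μ := by
    refine nce_integrable_of_bound (|Real.log a| + |Real.log B|)
      ?_ ?_
    · refine (Real.measurable_log.comp ?_).aestronglyMeasurable
      exact (measurable_const.mul (Real.measurable_exp.comp (hf.div_const τ))).add hSmeas
    · filter_upwards [hWb, hSb] with ω hW hSω
      have hpos : 0 < S ω := lt_of_lt_of_le ha hSω.1
      have h1 : Real.log a ≤ logW ω := by
        refine Real.log_le_log ha ?_
        exact le_trans hSω.1 hW.1
      have h2 : logW ω ≤ Real.log B := by
        refine Real.log_le_log (lt_of_lt_of_le hpos hW.1) hW.2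
      calc |logW ω| ≤ max |Real.log a| |Real.log B| := abs_le_max_abs_abs h1 h2
        _ ≤ |Real.log a| + |Real.log B| := max_le_add_of_nonneg (abs_nonneg _) (abs_nonneg _)
  -- Step 1: dropping the nonnegative lam-term
  have hstep1 : μ[fun ω => Real.log (S ω)] ≤ μ[logW] := by
    refine integral_mono_ae hlogS_int hlogW_int ?_
    filter_upwards [hWb, hSb] with ω hW hSω
    exact Real.log_le_log (lt_of_lt_of_le ha hSω.1) hW.1
  -- Step 2: main second-moment bound
  have hint1 : Integrable (fun ω => (m - S ω) / m) μ := by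
    have h : Integrable (fun ω => m - S ω) μ := (integrable_const m).sub hSint
    exact h.div_const m
  have hint2 : Integrable (fun ω => (S ω - m) ^ 2 / (a * m)) μ := by
    have h : Integrable (fun ω => (S ω - m) ^ 2) μ :=
      (hS2.sub (memLp_const m)).integrable_sq
    exact h.div_const (a * m)
  have hint_rhs : Integrable (fun ω => (m - S ω) / m + (S ω - m) ^ 2 / (a * m)) μ :=
    hint1.add hint2
  have hint_lhs : Integrable (fun ω => Real.log m - Real.log (S ω)) μ :=
    (integrable_const (Real.log m)).sub hlogS_int
  have hstep2 : μ[fun ω => Real.log m - Real.log (S ω)]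
      ≤ μ[fun ω => (m - S ω) / m + (S ω - m) ^ 2 / (a * m)] := by
    refine integral_mono_ae hint_lhs hint_rhs ?_
    filter_upwards [hSb] with ω h
    exact nce_log_key ha ham h.1
  have hlhs_eq : μ[fun ω => Real.log m - Real.log (S ω)]
      = Real.log m - μ[fun ω => Real.log (S ω)] := by
    rw [integral_sub (integrable_const _) hlogS_int]
    simp
  have hrhs_eq : μ[fun ω => (m - S ω) / m + (S ω - m) ^ 2 / (a * m)]
      = variance S μ / (a * m) := by
    rw [integral_add hint1 hint2]
    have h1 : μ[fun ω => (m - S ω) / m] = 0 := by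
      rw [integral_div, integral_sub (integrable_const m) hSint]
      simp [hES]
    have h2 : μ[fun ω => (S ω - m) ^ 2 / (a * m)] = variance S μ / (a * m) := by
      rw [integral_div, hVar_eq]
    calc μ[fun ω => (m - S ω) / m] + μ[fun ω => (S ω - m) ^ 2 / (a * m)]
        = 0 + variance S μ / (a * m) := by rw [h1, h2]
      _ = variance S μ / (a * m) := by ring
  -- putting the analytic bounds together
  have hmain : Real.log m - μ[fun ω => Real.log (S ω)] ≤ b * (b - a) / N := by
    have h1 : Real.log m - μ[fun ω => Real.log (S ω)] ≤ variance S μ / (a * m) := by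
      rw [← hlhs_eq, ← hrhs_eq]; exact hstep2
    have h2 : variance S μ / (a * m) ≤ ((b - a) * (m - a) / N) / (a * m) :=
      div_le_div_of_nonneg_right hVS (by positivity)
    have h3 : ((b - a) * (m - a) / N) / (a * m) ≤ b * (b - a) / N := by
      rw [div_le_div_iff₀ (by positivity) hNpos]
      have hbam : b * (a * m) = m := by
        calc b * (a * m) = (a * b) * m := by ring
          _ = m := by rw [hab]; ring
      have hgoal : (b - a) * (m - a) ≤ b * (b - a) * (a * m) := by
        calc (b - a) * (m - a) ≤ (b - a) * m := by nlinarith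
          _ = b * (b - a) * (a * m) := by rw [mul_comm b (b - a), mul_assoc, hbam]
      calc (b - a) * (m - a) / N * N = (b - a) * (m - a) := by field_simp
        _ ≤ b * (b - a) * (a * m) := hgoal
    linarith
  -- the rpow arithmetic
  have hrpow : b * (b - a) / N ≤ (5 / 4) * (N : ℝ) ^ (-(2 : ℝ) / 3) * b * (b - a) := by
    have hrp : ((N : ℝ))⁻¹ ≤ (N : ℝ) ^ (-(2 : ℝ) / 3) := by
      rw [← Real.rpow_neg_one]
      exact Real.rpow_le_rpow_of_exponent_le hN1 (by norm_num)
    have hbb : 0 ≤ b * (b - a) := mul_nonneg hb.le (by linarith)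
    calc b * (b - a) / N = b * (b - a) * (N : ℝ)⁻¹ := by ring
      _ ≤ b * (b - a) * (N : ℝ) ^ (-(2 : ℝ) / 3) := mul_le_mul_of_nonneg_left hrp hbb
      _ ≤ (5 / 4) * (N : ℝ) ^ (-(2 : ℝ) / 3) * b * (b - a) := by
          nlinarith [Real.rpow_nonneg (le_of_lt hNpos) (-(2 : ℝ) / 3),
            mul_nonneg hbb (Real.rpow_nonneg (le_of_lt hNpos) (-(2 : ℝ) / 3))]
  have hlam_term : 0 ≤ (lam / N) * Real.exp (2 / τ) := by positivity
  have hfinal : Real.log m - μ[logW]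
      ≤ (lam / N) * Real.exp (2 / τ)
        + (5 / 4) * (N : ℝ) ^ (-(2 : ℝ) / 3) * b * (b - a) := by
    linarith
  calc (-(1 / τ) * μ[f] + Real.log m) - (-(1 / τ) * μ[f] + μ[logW])
      = Real.log m - μ[logW] := by ring
    _ ≤ (lam / N) * Real.exp (2 / τ)
        + (5 / 4) * (N : ℝ) ^ (-(2 : ℝ) / 3) * b * (b - a) := hfinal
    _ = (lam / N) * Real.exp (2 / τ) +
        (5 / 4) * (N : ℝ) ^ (-(2 : ℝ) / 3) * Real.exp (1 / τ) *
          (Real.exp (1 / τ) - Real.exp (-(1 / τ))) := by rw [hb_def, ha_def]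
end

section
/- Let 0 < a ≤ b be real numbers and let X₁, …, X_N be i.i.d. real random variables on a probability space with a ≤ X₁ ≤ b almost surely. Then log E[X₁] − E[ log( (1/N)·Σ_{i=1}^{N} X_i ) ] ≤ (5/4)·N^(−2/3)·(b − a)/a. -/
open MeasureTheory ProbabilityTheory

/-- Pointwise inequality: for `0 < a ≤ x` and `a ≤ m`,
`log m - log x ≤ (m - x)/m + (m - x)^2/(a*m)`. -/
lemma log_sub_log_le_aux {a m x : ℝ} (ha : 0 < a) (ham : a ≤ m) (hax : a ≤ x) :
    Real.log m - Real.log x ≤ (m - x) / m + (m - x) ^ 2 / (a * m) := by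
  have hm : 0 < m := lt_of_lt_of_le ha ham
  have hx : 0 < x := lt_of_lt_of_le ha hax
  have h1 : Real.log m - Real.log x ≤ (m - x) / x := by
    have h2 : Real.log (m / x) ≤ m / x - 1 := Real.log_le_sub_one_of_pos (by positivity)
    rw [Real.log_div hm.ne' hx.ne'] at h2
    calc Real.log m - Real.log x ≤ m / x - 1 := h2
      _ = (m - x) / x := by field_simp
  refine h1.trans ?_
  rw [div_add_div _ _ hm.ne' (by positivity : (a * m) ≠ 0), div_le_div_iff₀ hx (by positivity)]
  nlinarith [sq_nonneg (m - x), mul_nonneg (sq_nonneg (m - x)) (sub_nonneg.2 hax),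
    mul_pos ha hm, mul_pos hx hm]

/-- Concentration estimate: for i.i.d. random variables `X₁, …, X_N` with
`a ≤ X₁ ≤ b` almost surely (`0 < a ≤ b`),
`log E[X₁] − E[log((1/N)·Σ_{i=1}^N X_i)] ≤ (5/4)·N^(−2/3)·(b − a)/a`. -/
theorem log_mean_concentration
    {Ω : Type*} [MeasurableSpace Ω] (μ : Measure Ω) [IsProbabilityMeasure μ]
    (a b : ℝ) (ha : 0 < a) (hab : a ≤ b)
    (N : ℕ) (hN : 1 ≤ N)
    (X : ℕ → Ω → ℝ) (hX : ∀ i, Measurable (X i))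
    (hindep : iIndepFun X μ)
    (hid : ∀ i, IdentDistrib (X i) (X 0) μ μ)
    (hbd : ∀ᵐ ω ∂μ, a ≤ X 0 ω ∧ X 0 ω ≤ b) :
    Real.log (μ[X 0]) -
        μ[fun ω => Real.log ((1 / N) * ∑ i ∈ Finset.range N, X i ω)] ≤
      (5 / 4) * (N : ℝ) ^ (-(2 : ℝ) / 3) * (b - a) / a := by
  classical
  have hN0 : (0 : ℝ) < N := by exact_mod_cast hN
  -- a.e. bounds for each X i
  have hbdi : ∀ i, ∀ᵐ ω ∂μ, a ≤ X i ω ∧ X i ω ≤ b := by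
    intro i
    have hs : MeasurableSet (Set.Icc a b) := measurableSet_Icc
    have h0 : ∀ᵐ x ∂(μ.map (X 0)), x ∈ Set.Icc a b :=
      (ae_map_iff (hX 0).aemeasurable hs).2 (hbd.mono fun ω h => ⟨h.1, h.2⟩)
    have h1 : ∀ᵐ x ∂(μ.map (X i)), x ∈ Set.Icc a b := (hid i).map_eq ▸ h0
    exact ((ae_map_iff (hX i).aemeasurable hs).1 h1).mono fun ω h => ⟨h.1, h.2⟩
  -- Memℒp facts
  have hmem : ∀ i, MemLp (X i) 2 μ := by
    intro i
    refine (memLp_top_of_bound (hX i).aestronglyMeasurable b ?_).mono_exponent le_top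
    exact (hbdi i).mono fun ω h => by
      rw [Real.norm_eq_abs, abs_le]; constructor <;> nlinarith [h.1, h.2]
  have hint : ∀ i, Integrable (X i) μ := fun i => (hmem i).integrable one_le_two
  set m := μ[X 0] with hm_def
  have hma : a ≤ m := by
    have := integral_mono_ae (integrable_const a) (hint 0) (hbd.mono fun ω h => h.1)
    simpa using this
  have hmb : m ≤ b := by
    have := integral_mono_ae (hint 0) (integrable_const b) (hbd.mono fun ω h => h.2)
    simpa using this
  have hm0 : 0 < m := lt_of_lt_of_le ha hma
  -- the empirical mean
  set S : Ω → ℝ := fun ω => (1 / N : ℝ) * ∑ i ∈ Finset.range N, X i ω with hS_def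
  have hSmeas : Measurable S :=
    measurable_const.mul (Finset.measurable_sum _ fun i _ => hX i)
  have hbdS : ∀ᵐ ω ∂μ, a ≤ S ω ∧ S ω ≤ b := by
    have hball : ∀ᵐ ω ∂μ, ∀ i, a ≤ X i ω ∧ X i ω ≤ b := ae_all_iff.2 hbdi
    refine hball.mono fun ω h => ?_
    have hl : (N : ℝ) * a ≤ ∑ i ∈ Finset.range N, X i ω := by
      calc (N : ℝ) * a = ∑ _i ∈ Finset.range N, a := by
            rw [Finset.sum_const, Finset.card_range, nsmul_eq_mul]
        _ ≤ _ := Finset.sum_le_sum fun i _ => (h i).1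
    have hu : ∑ i ∈ Finset.range N, X i ω ≤ (N : ℝ) * b := by
      calc ∑ i ∈ Finset.range N, X i ω ≤ ∑ _i ∈ Finset.range N, b :=
            Finset.sum_le_sum fun i _ => (h i).2
        _ = (N : ℝ) * b := by rw [Finset.sum_const, Finset.card_range, nsmul_eq_mul]
    constructor
    · have := mul_le_mul_of_nonneg_left hl (by positivity : (0:ℝ) ≤ 1 / N)
      calc a = (1 / N : ℝ) * ((N : ℝ) * a) := by field_simp
        _ ≤ S ω := this
    · have := mul_le_mul_of_nonneg_left hu (by positivity : (0:ℝ) ≤ 1 / N)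
      calc S ω ≤ (1 / N : ℝ) * ((N : ℝ) * b) := this
        _ = b := by field_simp
  have hSmem : MemLp S 2 μ := by
    refine (memLp_top_of_bound hSmeas.aestronglyMeasurable b ?_).mono_exponent le_top
    exact hbdS.mono fun ω h => by
      rw [Real.norm_eq_abs, abs_le]; constructor <;> nlinarith [h.1, h.2]
  have hSint : Integrable S μ := hSmem.integrable one_le_two
  -- mean of S
  have hES : μ[S] = m := by
    have : μ[S] = (1 / N : ℝ) * ∑ i ∈ Finset.range N, μ[X i] := by
      rw [hS_def]
      rw [integral_const_mul]
      congr 1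
      exact integral_finset_sum _ fun i _ => hint i
    rw [this]
    have : ∀ i ∈ Finset.range N, μ[X i] = m := fun i _ => (hid i).integral_eq
    rw [Finset.sum_congr rfl this, Finset.sum_const, Finset.card_range, nsmul_eq_mul]
    field_simp
  -- variance computations
  have hvarS : variance S μ = variance (X 0) μ / N := by
    have h1 : S = fun ω => (1 / N : ℝ) * (∑ i ∈ Finset.range N, X i) ω := by
      funext ω; simp [hS_def]
    rw [h1, variance_const_mul]
    have h2 : variance (∑ i ∈ Finset.range N, X i) μ
        = ∑ i ∈ Finset.range N, variance (X i) μ :=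
      IndepFun.variance_sum (fun i _ => hmem i)
        (fun i _ j _ hij => hindep.indepFun hij)
    rw [h2]
    have h3 : ∀ i ∈ Finset.range N, variance (X i) μ = variance (X 0) μ :=
      fun i _ => (hid i).variance_eq
    rw [Finset.sum_congr rfl h3, Finset.sum_const, Finset.card_range, nsmul_eq_mul]
    field_simp
  -- bound on variance of X 0
  have hsq_int : Integrable (fun ω => (X 0 ω) ^ 2) μ := by
    simpa using (hmem 0).integrable_sq
  have hvar0 : variance (X 0) μ ≤ (b - a) * m := by
    have hXsq : μ[(X 0) ^ 2] = ∫ ω, (X 0 ω) ^ 2 ∂μ := rfl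
    have h1 : ∫ ω, (X 0 ω) ^ 2 ∂μ ≤ ∫ ω, b * X 0 ω ∂μ :=
      integral_mono_ae hsq_int ((hint 0).const_mul b)
        (hbd.mono fun ω h => by show X 0 ω ^ 2 ≤ b * X 0 ω; nlinarith [h.1, h.2, ha])
    have h2 : ∫ ω, b * X 0 ω ∂μ = b * m := by rw [integral_const_mul]
    rw [variance_eq_sub (hmem 0), ← hm_def, hXsq]
    nlinarith [h1, h2, mul_le_mul_of_nonneg_right hma hm0.le]
  -- integrability of log S and of the quadratic bound
  have hlogS_int : Integrable (fun ω => Real.log (S ω)) μ := by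
    refine ⟨(Real.measurable_log.comp hSmeas).aestronglyMeasurable, ?_⟩
    refine HasFiniteIntegral.of_bounded (C := max |Real.log a| |Real.log b|) ?_
    refine hbdS.mono fun ω h => ?_
    rw [Real.norm_eq_abs]
    exact abs_le_max_abs_abs (Real.log_le_log ha h.1) (Real.log_le_log (lt_of_lt_of_le ha h.1) h.2)
  have hsqS_int : Integrable (fun ω => (m - S ω) ^ 2) μ := by
    refine ⟨((measurable_const.sub hSmeas).pow_const 2).aestronglyMeasurable, ?_⟩
    refine HasFiniteIntegral.of_bounded (C := (b - a) ^ 2) ?_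
    refine hbdS.mono fun ω h => ?_
    rw [Real.norm_eq_abs, abs_le]
    constructor <;> nlinarith [h.1, h.2, hma, hmb]
  -- E[(m - S)^2] = variance S
  have hEsqS : μ[fun ω => (m - S ω) ^ 2] = variance S μ := by
    rw [variance_eq_integral hSmeas.aemeasurable, hES]
    congr 1
    funext ω
    simp only [Pi.pow_apply, Pi.sub_apply]
    ring
  -- main estimate
  have hmain : Real.log m - μ[fun ω => Real.log (S ω)]
      ≤ μ[fun ω => (m - S ω) ^ 2] / (a * m) := by
    have h1 : Real.log m - μ[fun ω => Real.log (S ω)]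
        = μ[fun ω => Real.log m - Real.log (S ω)] := by
      rw [integral_sub (integrable_const _) hlogS_int, integral_const]
      simp
    rw [h1]
    have h2 : μ[fun ω => Real.log m - Real.log (S ω)]
        ≤ μ[fun ω => (m - S ω) / m + (m - S ω) ^ 2 / (a * m)] := by
      refine integral_mono_ae ((integrable_const _).sub hlogS_int) ?_ ?_
      · exact (((integrable_const m).sub hSint).div_const m).add (hsqS_int.div_const _)
      · exact hbdS.mono fun ω h => log_sub_log_le_aux ha hma h.1
    refine h2.trans ?_
    have iA : Integrable (fun ω => (m - S ω) / m) μ :=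
      ((integrable_const m).sub hSint).div_const m
    have iB : Integrable (fun ω => (m - S ω) ^ 2 / (a * m)) μ := hsqS_int.div_const _
    have hsplit : μ[fun ω => (m - S ω) / m + (m - S ω) ^ 2 / (a * m)]
        = μ[fun ω => (m - S ω) / m] + μ[fun ω => (m - S ω) ^ 2 / (a * m)] :=
      integral_add iA iB
    have h3 : μ[fun ω => (m - S ω) / m] = 0 := by
      have hsub : μ[fun ω => m - S ω] = m - μ[S] := by
        have := integral_sub (integrable_const m) hSint
        simpa using this
      rw [integral_div, hsub, hES]
      simp
    have h4 : μ[fun ω => (m - S ω) ^ 2 / (a * m)] = μ[fun ω => (m - S ω) ^ 2] / (a * m) :=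
      integral_div _ _
    rw [hsplit, h3, h4]
    simp
  -- numeric conclusion
  have hvarSb : μ[fun ω => (m - S ω) ^ 2] ≤ (b - a) * m / N := by
    rw [hEsqS, hvarS]
    gcongr
  have hfinal : μ[fun ω => (m - S ω) ^ 2] / (a * m) ≤ (b - a) / (a * N) := by
    calc μ[fun ω => (m - S ω) ^ 2] / (a * m) ≤ ((b - a) * m / N) / (a * m) := by
          gcongr
      _ = (b - a) / (a * N) := by field_simp
  have hpow : (1 : ℝ) / N ≤ (5 / 4) * (N : ℝ) ^ (-(2 : ℝ) / 3) := by
    have h1 : (N : ℝ) ^ (-(1 : ℝ)) ≤ (N : ℝ) ^ (-(2 : ℝ) / 3) :=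
      Real.rpow_le_rpow_of_exponent_le (by exact_mod_cast hN) (by norm_num)
    rw [Real.rpow_neg_one] at h1
    have h2 : (0:ℝ) ≤ (N : ℝ) ^ (-(2 : ℝ) / 3) := Real.rpow_nonneg hN0.le _
    calc (1 : ℝ) / N = (N : ℝ)⁻¹ := one_div _
      _ ≤ (N : ℝ) ^ (-(2 : ℝ) / 3) := h1
      _ ≤ (5 / 4) * (N : ℝ) ^ (-(2 : ℝ) / 3) := by linarith
  calc Real.log m - μ[fun ω => Real.log ((1 / N : ℝ) * ∑ i ∈ Finset.range N, X i ω)]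
      = Real.log m - μ[fun ω => Real.log (S ω)] := rfl
    _ ≤ μ[fun ω => (m - S ω) ^ 2] / (a * m) := hmain
    _ ≤ (b - a) / (a * N) := hfinal
    _ = (b - a) / a * (1 / N) := by field_simp
    _ ≤ (b - a) / a * ((5 / 4) * (N : ℝ) ^ (-(2 : ℝ) / 3)) := by
        exact mul_le_mul_of_nonneg_left hpow (div_nonneg (by linarith) ha.le)
    _ = (5 / 4) * (N : ℝ) ^ (-(2 : ℝ) / 3) * (b - a) / a := by ring
end

section
/- Let τ > 0, let λ ≥ 0, and let 0 ≤ ε ≤ 1 be the proportion of correct pseudo data. Work on a probability space. Let f and f′ be measurable real random variables with |f| ≤ 1 and |f′| ≤ 1 almost surely, let g₁, g₂, … be identically distributed measurable real random variables with |g₁| ≤ 1 almost surely, and let g′₁, g′₂, … be identically distributed measurable real random variables with |g′₁| ≤ 1 almost surely. For each integer N ≥ 1, let ℓ_N := −(1/τ)·E[f] + E[ log( (λ/N)·exp(f/τ) + (1/N)·Σ_{i=1}^{N} exp(g_i/τ) ) ] be the centered NCE loss on the correct pseudo data (which carry λ duplicates) and let ℓ⁰_N := −(1/τ)·E[f′]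 + E[ log( (1/N)·Σ_{i=1}^{N} exp(g′_i/τ) ) ] be the centered NCE loss on the incorrect pseudo data (which carry no duplicates). Define the pseudo-data loss ℓ^{ps}_N := ε·ℓ_N + (1 − ε)·ℓ⁰_N, and define ℓ^{ps}_∞ := ε·( −(1/τ)·E[f] + log E[exp(g₁/τ)] ) + (1 − ε)·( −(1/τ)·E[f′] + log E[exp(g′₁/τ)] ). Then for every N ≥ 1, ℓ^{ps}_N − ℓ^{ps}_∞ ≤ ε·(λ/N)·exp(2/τ). -/
open MeasureTheory ProbabilityTheory

lemma integrable_of_abs_bound {Ω : Type*} [MeasurableSpace Ω] {μ : Measure Ω}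
    [IsProbabilityMeasure μ] {X : Ω → ℝ} (hX : Measurable X) {C : ℝ}
    (h : ∀ᵐ ω ∂μ, |X ω| ≤ C) : Integrable X μ :=
  (integrable_const C).mono' hX.aestronglyMeasurable
    (by filter_upwards [h] with ω hω; simpa [Real.norm_eq_abs] using hω)

lemma ae_bound_of_identDistrib {Ω : Type*} [MeasurableSpace Ω] {μ : Measure Ω} {X Y : Ω → ℝ}
    (h : IdentDistrib X Y μ μ) (hY : ∀ᵐ ω ∂μ, |Y ω| ≤ 1) : ∀ᵐ ω ∂μ, |X ω| ≤ 1 := by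
  have hs : MeasurableSet {x : ℝ | |x| ≤ 1} :=
    (isClosed_le continuous_abs continuous_const).measurableSet
  rw [ae_iff] at hY ⊢
  have h1 : μ {ω | ¬ |X ω| ≤ 1} = (μ.map X) ({x : ℝ | |x| ≤ 1}ᶜ) :=
    (Measure.map_apply_of_aemeasurable h.aemeasurable_fst hs.compl).symm
  have h2 : μ {ω | ¬ |Y ω| ≤ 1} = (μ.map Y) ({x : ℝ | |x| ≤ 1}ᶜ) :=
    (Measure.map_apply_of_aemeasurable h.aemeasurable_snd hs.compl).symm
  rw [h1, h.map_eq, ← h2, hY]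

lemma log_integral_aux {Ω : Type*} [MeasurableSpace Ω] {μ : Measure Ω} [IsProbabilityMeasure μ]
    {X : Ω → ℝ} (hX : Measurable X) {lo hi c : ℝ} (hlo : 0 < lo) (hc : 0 < c)
    (hb : ∀ᵐ ω ∂μ, lo ≤ X ω ∧ X ω ≤ hi) :
    ∫ ω, Real.log (X ω) ∂μ ≤ Real.log c + (∫ ω, X ω ∂μ)/c - 1 := by
  have hXi : Integrable X μ := integrable_of_abs_bound hX
    (by filter_upwards [hb] with ω ⟨h1, h2⟩; rw [abs_le]; constructor <;> linarith [hlo.le])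
  have hlogi : Integrable (fun ω => Real.log (X ω)) μ := integrable_of_abs_bound
    (hX.log) (C := max |Real.log lo| |Real.log hi|) (by
      filter_upwards [hb] with ω ⟨h1, h2⟩
      exact abs_le_max_abs_abs (Real.log_le_log hlo h1) (Real.log_le_log (hlo.trans_le h1) h2))
  have hpt : ∀ᵐ ω ∂μ, Real.log (X ω) ≤ Real.log c + X ω / c - 1 := by
    filter_upwards [hb] with ω ⟨h1, h2⟩
    have hx : 0 < X ω := hlo.trans_le h1
    have := Real.log_le_sub_one_of_pos (div_pos hx hc)
    rw [Real.log_div hx.ne' hc.ne'] at this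
    linarith
  calc ∫ ω, Real.log (X ω) ∂μ ≤ ∫ ω, (Real.log c + X ω / c - 1) ∂μ :=
        integral_mono_ae hlogi (by
          have i1 : Integrable (fun ω => Real.log c + X ω / c) μ :=
            (integrable_const _).add (hXi.div_const c)
          exact i1.sub (integrable_const 1)) hpt
    _ = Real.log c + (∫ ω, X ω ∂μ)/c - 1 := by
        have i1 : Integrable (fun ω => Real.log c + X ω / c) μ :=
          (integrable_const _).add (hXi.div_const c)
        rw [integral_sub i1 (integrable_const 1),
          integral_add (integrable_const _) (hXi.div_const c), integral_div, integral_const,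
          integral_const]
        simp

lemma exp_pt {τ x : ℝ} (hτ : 0 < τ) (hx : |x| ≤ 1) :
    Real.exp (-(1/τ)) ≤ Real.exp (x/τ) ∧ Real.exp (x/τ) ≤ Real.exp (1/τ) := by
  rw [abs_le] at hx
  constructor <;> apply Real.exp_le_exp.2
  · have : (-1:ℝ)/τ ≤ x/τ := (div_le_div_iff_of_pos_right hτ).2 hx.1
    rwa [neg_div] at this
  · exact (div_le_div_iff_of_pos_right hτ).2 hx.2

lemma exp_int_bounds {Ω : Type*} [MeasurableSpace Ω] {μ : Measure Ω} [IsProbabilityMeasure μ]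
    {h : Ω → ℝ} (hm : Measurable h) {τ : ℝ} (hτ : 0 < τ) (hb : ∀ᵐ ω ∂μ, |h ω| ≤ 1) :
    Integrable (fun ω => Real.exp (h ω / τ)) μ ∧
    Real.exp (-(1/τ)) ≤ ∫ ω, Real.exp (h ω / τ) ∂μ ∧
    (∫ ω, Real.exp (h ω / τ) ∂μ) ≤ Real.exp (1/τ) := by
  have hmeas : Measurable (fun ω => Real.exp (h ω / τ)) :=
    Real.measurable_exp.comp (hm.div_const τ)
  have hint : Integrable (fun ω => Real.exp (h ω / τ)) μ := integrable_of_abs_bound hmeas (by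
    filter_upwards [hb] with ω hω
    rw [abs_of_pos (Real.exp_pos _)]
    exact (exp_pt hτ hω).2)
  refine ⟨hint, ?_, ?_⟩
  · calc Real.exp (-(1/τ)) = ∫ _ω, Real.exp (-(1/τ)) ∂μ := by simp
      _ ≤ _ := integral_mono_ae (integrable_const _) hint
          (by filter_upwards [hb] with ω hω; exact (exp_pt hτ hω).1)
  · calc (∫ ω, Real.exp (h ω / τ) ∂μ) ≤ ∫ _ω, Real.exp (1/τ) ∂μ :=
        integral_mono_ae hint (integrable_const _)
          (by filter_upwards [hb] with ω hω; exact (exp_pt hτ hω).2)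
      _ = Real.exp (1/τ) := by simp


/-- Upper deviation of the pseudo-data centered NCE loss
`ℓ^{ps}_N = ε·ℓ_N + (1−ε)·ℓ⁰_N` from its limit:
`ℓ^{ps}_N − ℓ^{ps}_∞ ≤ ε·(λ/N)·exp(2/τ)` for every `N ≥ 1`. -/
theorem pseudo_data_loss_upper_deviation
    {Ω : Type*} [MeasurableSpace Ω] (μ : Measure Ω) [IsProbabilityMeasure μ]
    (τ lam ε : ℝ) (hτ : 0 < τ) (hlam : 0 ≤ lam) (hε0 : 0 ≤ ε) (hε1 : ε ≤ 1)
    (f f' : Ω → ℝ) (hf : Measurable f) (hf' : Measurable f')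
    (hfb : ∀ᵐ ω ∂μ, |f ω| ≤ 1) (hfb' : ∀ᵐ ω ∂μ, |f' ω| ≤ 1)
    (g g' : ℕ → Ω → ℝ) (hg : ∀ i, Measurable (g i)) (hg' : ∀ i, Measurable (g' i))
    (hid : ∀ i, IdentDistrib (g i) (g 0) μ μ)
    (hid' : ∀ i, IdentDistrib (g' i) (g' 0) μ μ)
    (hgb : ∀ᵐ ω ∂μ, |g 0 ω| ≤ 1) (hgb' : ∀ᵐ ω ∂μ, |g' 0 ω| ≤ 1) :
    ∀ N : ℕ, 1 ≤ N →
      (ε * (-(1 / τ) * μ[f] +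
            μ[fun ω => Real.log ((lam / N) * Real.exp (f ω / τ) +
              (1 / N) * ∑ i ∈ Finset.range N, Real.exp (g i ω / τ))]) +
        (1 - ε) * (-(1 / τ) * μ[f'] +
            μ[fun ω => Real.log ((1 / N) * ∑ i ∈ Finset.range N, Real.exp (g' i ω / τ))])) -
      (ε * (-(1 / τ) * μ[f] + Real.log (μ[fun ω => Real.exp (g 0 ω / τ)])) +
        (1 - ε) * (-(1 / τ) * μ[f'] + Real.log (μ[fun ω => Real.exp (g' 0 ω / τ)]))) ≤
      ε * (lam / N) * Real.exp (2 / τ) := by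
  intro N hN
  have hN0 : (0:ℝ) < N := by exact_mod_cast Nat.lt_of_lt_of_le Nat.zero_lt_one hN
  -- a.e. bounds for all g i, g' i
  have hgae : ∀ᵐ ω ∂μ, ∀ i, |g i ω| ≤ 1 :=
    ae_all_iff.2 (fun i => ae_bound_of_identDistrib (hid i) hgb)
  have hgae' : ∀ᵐ ω ∂μ, ∀ i, |g' i ω| ≤ 1 :=
    ae_all_iff.2 (fun i => ae_bound_of_identDistrib (hid' i) hgb')
  -- integrability and bounds for exp
  obtain ⟨iif, hfl, hfu⟩ := exp_int_bounds hf hτ hfb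
  obtain ⟨icg, hcl, hcu⟩ := exp_int_bounds (hg 0) hτ hgb
  obtain ⟨icg', hcl', hcu'⟩ := exp_int_bounds (hg' 0) hτ hgb'
  set If : ℝ := ∫ ω, Real.exp (f ω / τ) ∂μ with hIf
  set c : ℝ := ∫ ω, Real.exp (g 0 ω / τ) ∂μ with hc
  set c' : ℝ := ∫ ω, Real.exp (g' 0 ω / τ) ∂μ with hc'
  have hcpos : 0 < c := lt_of_lt_of_le (Real.exp_pos _) hcl
  have hcpos' : 0 < c' := lt_of_lt_of_le (Real.exp_pos _) hcl'
  have hgint : ∀ i, Integrable (fun ω => Real.exp (g i ω / τ)) μ := fun i =>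
    (exp_int_bounds (hg i) hτ (ae_bound_of_identDistrib (hid i) hgb)).1
  have hgint' : ∀ i, Integrable (fun ω => Real.exp (g' i ω / τ)) μ := fun i =>
    (exp_int_bounds (hg' i) hτ (ae_bound_of_identDistrib (hid' i) hgb')).1
  have hgeq : ∀ i, (∫ ω, Real.exp (g i ω / τ) ∂μ) = c := fun i => by
    have := ((hid i).comp (Real.measurable_exp.comp (measurable_id.div_const τ))).integral_eq
    simpa [Function.comp] using this
  have hgeq' : ∀ i, (∫ ω, Real.exp (g' i ω / τ) ∂μ) = c' := fun i => by
    have := ((hid' i).comp (Real.measurable_exp.comp (measurable_id.div_const τ))).integral_eq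
    simpa [Function.comp] using this
  have hsumint : Integrable (fun ω => ∑ i ∈ Finset.range N, Real.exp (g i ω / τ)) μ :=
    integrable_finset_sum _ (fun i _ => hgint i)
  have hsumint' : Integrable (fun ω => ∑ i ∈ Finset.range N, Real.exp (g' i ω / τ)) μ :=
    integrable_finset_sum _ (fun i _ => hgint' i)
  -- measurability of the arguments of log
  have hAmeas : Measurable (fun ω => (lam / (N:ℝ)) * Real.exp (f ω / τ) +
      (1 / (N:ℝ)) * ∑ i ∈ Finset.range N, Real.exp (g i ω / τ)) :=
    ((Real.measurable_exp.comp (hf.div_const τ)).const_mul _).add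
      ((Finset.measurable_sum _ (fun i _ =>
        Real.measurable_exp.comp ((hg i).div_const τ))).const_mul _)
  have hBmeas : Measurable (fun ω =>
      (1 / (N:ℝ)) * ∑ i ∈ Finset.range N, Real.exp (g' i ω / τ)) :=
    (Finset.measurable_sum _ (fun i _ =>
      Real.measurable_exp.comp ((hg' i).div_const τ))).const_mul _
  -- integrals of the arguments of log
  have hIAval : (∫ ω, ((lam / (N:ℝ)) * Real.exp (f ω / τ) +
      (1 / (N:ℝ)) * ∑ i ∈ Finset.range N, Real.exp (g i ω / τ)) ∂μ) = (lam / N) * If + c := by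
    rw [integral_add (iif.const_mul _) (hsumint.const_mul _), integral_const_mul,
      integral_const_mul, integral_finset_sum _ (fun i _ => hgint i)]
    simp only [hgeq, Finset.sum_const, Finset.card_range, nsmul_eq_mul]
    field_simp
    rfl
  have hIBval : (∫ ω, ((1 / (N:ℝ)) * ∑ i ∈ Finset.range N, Real.exp (g' i ω / τ)) ∂μ) = c' := by
    rw [integral_const_mul, integral_finset_sum _ (fun i _ => hgint' i)]
    simp only [hgeq', Finset.sum_const, Finset.card_range, nsmul_eq_mul]
    field_simp
  -- pointwise bounds on the arguments of log
  have hAbnd : ∀ᵐ ω ∂μ, Real.exp (-(1/τ)) ≤ (lam / (N:ℝ)) * Real.exp (f ω / τ) +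
      (1 / (N:ℝ)) * ∑ i ∈ Finset.range N, Real.exp (g i ω / τ) ∧
      (lam / (N:ℝ)) * Real.exp (f ω / τ) +
      (1 / (N:ℝ)) * ∑ i ∈ Finset.range N, Real.exp (g i ω / τ) ≤
      (lam / N) * Real.exp (1/τ) + Real.exp (1/τ) := by
    filter_upwards [hgae, hfb] with ω hω hfω
    have hlow : ∀ i ∈ Finset.range N, Real.exp (-(1/τ)) ≤ Real.exp (g i ω / τ) :=
      fun i _ => (exp_pt hτ (hω i)).1
    have hhigh : ∀ i ∈ Finset.range N, Real.exp (g i ω / τ) ≤ Real.exp (1/τ) :=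
      fun i _ => (exp_pt hτ (hω i)).2
    have h1 : (N:ℝ) * Real.exp (-(1/τ)) ≤ ∑ i ∈ Finset.range N, Real.exp (g i ω / τ) := by
      calc (N:ℝ) * Real.exp (-(1/τ)) = ∑ _i ∈ Finset.range N, Real.exp (-(1/τ)) := by
            simp [Finset.sum_const, mul_comm]
        _ ≤ _ := Finset.sum_le_sum hlow
    have h2 : (∑ i ∈ Finset.range N, Real.exp (g i ω / τ)) ≤ (N:ℝ) * Real.exp (1/τ) := by
      calc (∑ i ∈ Finset.range N, Real.exp (g i ω / τ)) ≤
            ∑ _i ∈ Finset.range N, Real.exp (1/τ) := Finset.sum_le_sum hhigh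
        _ = (N:ℝ) * Real.exp (1/τ) := by simp [Finset.sum_const, mul_comm]
    have h3 : 0 ≤ (lam / (N:ℝ)) * Real.exp (f ω / τ) := by positivity
    have h4 : (lam / (N:ℝ)) * Real.exp (f ω / τ) ≤ (lam / (N:ℝ)) * Real.exp (1/τ) :=
      mul_le_mul_of_nonneg_left (exp_pt hτ hfω).2 (by positivity)
    have h5 : (1 / (N:ℝ)) * ((N:ℝ) * Real.exp (-(1/τ))) = Real.exp (-(1/τ)) := by
      field_simp
    have h6 : (1 / (N:ℝ)) * ((N:ℝ) * Real.exp (1/τ)) = Real.exp (1/τ) := by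
      field_simp
    have h7 : (1 / (N:ℝ)) * ((N:ℝ) * Real.exp (-(1/τ))) ≤
        (1 / (N:ℝ)) * ∑ i ∈ Finset.range N, Real.exp (g i ω / τ) :=
      mul_le_mul_of_nonneg_left h1 (by positivity)
    have h8 : (1 / (N:ℝ)) * (∑ i ∈ Finset.range N, Real.exp (g i ω / τ)) ≤
        (1 / (N:ℝ)) * ((N:ℝ) * Real.exp (1/τ)) :=
      mul_le_mul_of_nonneg_left h2 (by positivity)
    constructor <;> linarith
  have hBbnd : ∀ᵐ ω ∂μ, Real.exp (-(1/τ)) ≤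
      (1 / (N:ℝ)) * ∑ i ∈ Finset.range N, Real.exp (g' i ω / τ) ∧
      (1 / (N:ℝ)) * ∑ i ∈ Finset.range N, Real.exp (g' i ω / τ) ≤ Real.exp (1/τ) := by
    filter_upwards [hgae'] with ω hω
    have h1 : (N:ℝ) * Real.exp (-(1/τ)) ≤ ∑ i ∈ Finset.range N, Real.exp (g' i ω / τ) := by
      calc (N:ℝ) * Real.exp (-(1/τ)) = ∑ _i ∈ Finset.range N, Real.exp (-(1/τ)) := by
            simp [Finset.sum_const, mul_comm]
        _ ≤ _ := Finset.sum_le_sum (fun i _ => (exp_pt hτ (hω i)).1)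
    have h2 : (∑ i ∈ Finset.range N, Real.exp (g' i ω / τ)) ≤ (N:ℝ) * Real.exp (1/τ) := by
      calc (∑ i ∈ Finset.range N, Real.exp (g' i ω / τ)) ≤
            ∑ _i ∈ Finset.range N, Real.exp (1/τ) :=
              Finset.sum_le_sum (fun i _ => (exp_pt hτ (hω i)).2)
        _ = (N:ℝ) * Real.exp (1/τ) := by simp [Finset.sum_const, mul_comm]
    have h5 : (1 / (N:ℝ)) * ((N:ℝ) * Real.exp (-(1/τ))) = Real.exp (-(1/τ)) := by field_simp
    have h6 : (1 / (N:ℝ)) * ((N:ℝ) * Real.exp (1/τ)) = Real.exp (1/τ) := by field_simp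
    have h7 := mul_le_mul_of_nonneg_left h1 (by positivity : (0:ℝ) ≤ 1 / (N:ℝ))
    have h8 := mul_le_mul_of_nonneg_left h2 (by positivity : (0:ℝ) ≤ 1 / (N:ℝ))
    constructor <;> linarith
  -- key estimates
  have key1 : (μ[fun ω => Real.log ((lam / N) * Real.exp (f ω / τ) +
      (1 / N) * ∑ i ∈ Finset.range N, Real.exp (g i ω / τ))]) - Real.log c ≤
      (lam / N) * Real.exp (2 / τ) := by
    have := log_integral_aux hAmeas (Real.exp_pos _) hcpos hAbnd
    rw [hIAval] at this
    have heq : ((lam / (N:ℝ)) * If + c)/c - 1 = (lam / N) * (If / c) := by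
      field_simp
      ring
    have hfin : If / c ≤ Real.exp (2/τ) := by
      have hd : If / c ≤ Real.exp (1/τ) / Real.exp (-(1/τ)) :=
        div_le_div₀ (Real.exp_pos _).le hfu (Real.exp_pos _) hcl
      have he : Real.exp (1/τ) / Real.exp (-(1/τ)) = Real.exp (2/τ) := by
        rw [← Real.exp_sub]; congr 1; ring
      linarith [he ▸ hd]
    have hmul : (lam / (N:ℝ)) * (If / c) ≤ (lam / (N:ℝ)) * Real.exp (2/τ) :=
      mul_le_mul_of_nonneg_left hfin (by positivity)
    linarith
  have key2 : (μ[fun ω => Real.log ((1 / N) * ∑ i ∈ Finset.range N, Real.exp (g' i ω / τ))]) -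
      Real.log c' ≤ 0 := by
    have := log_integral_aux hBmeas (Real.exp_pos _) hcpos' hBbnd
    rw [hIBval] at this
    have : (∫ ω, Real.log ((1 / (N:ℝ)) * ∑ i ∈ Finset.range N, Real.exp (g' i ω / τ)) ∂μ) ≤
        Real.log c' := by
      have hd : c'/c' - 1 = 0 := by field_simp; norm_num
      linarith
    linarith
  -- combine
  set IA := μ[fun ω => Real.log ((lam / N) * Real.exp (f ω / τ) +
      (1 / N) * ∑ i ∈ Finset.range N, Real.exp (g i ω / τ))]
  set IB := μ[fun ω => Real.log ((1 / N) * ∑ i ∈ Finset.range N, Real.exp (g' i ω / τ))]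
  have expand : (ε * (-(1 / τ) * μ[f] + IA) + (1 - ε) * (-(1 / τ) * μ[f'] + IB)) -
      (ε * (-(1 / τ) * μ[f] + Real.log c) + (1 - ε) * (-(1 / τ) * μ[f'] + Real.log c')) =
      ε * (IA - Real.log c) + (1 - ε) * (IB - Real.log c') := by ring
  rw [expand]
  calc ε * (IA - Real.log c) + (1 - ε) * (IB - Real.log c') ≤
      ε * ((lam / N) * Real.exp (2 / τ)) + (1 - ε) * 0 :=
        add_le_add (mul_le_mul_of_nonneg_left key1 hε0)
          (mul_le_mul_of_nonneg_left key2 (by linarith))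
    _ = ε * (lam / N) * Real.exp (2 / τ) := by ring
end
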